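/- Let σ assign to each pair (m, s), where m ∈ ℕ and s is a finite binary string (a list of Booleans), a finite binary string σ(m,s) (the 'stem'), subject to: (i) if s is an initial segment of t then σ(m,s) is an initial segment of σ(m,t); (ii) for every m and s, the strings σ(m, s⌢0) and σ(m, s⌢1) are incomparable (neither is an initial segment of the other) and each properly extends σ(m,s); (iii) for every n ∈ ℕ, whenever (m,s) ≠ (m',s') with m, m' < n and s, s' both of length n+1, the strings σ(m,s) and σ(m',s') are incomparable. For m ∈ ℕ and a finite binary string s, define A(m,s) to be the set of all finite binary strings u such that u is an initial segment of σ(m,t) for some t extending s. Then for all (m,s) and (m',s'): unless m = m' and one of s, s' is an initial segment of the other, the intersection A(m,s) ∩ A(m',s') is finite. -/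
import Mathlib


/-- Two finite binary strings are incomparable: neither is a prefix of the other. -/
def Incomparable (u v : List Bool) : Prop := ¬ u <+: v ∧ ¬ v <+: u

/-- The key combinatorial fact about the fusion system of stems used in the construction
of Jensen's forcing: given stems `σ m s` satisfying monotonicity, splitting, and the
incomparability condition (iii), the "branches through `(m, s)`" sets
`A m s = {u | ∃ t ⊇ s, u <+: σ m t}` have pairwise finite intersections, except when
`m = m'` and `s`, `s'` are comparable. -/
theorem fusion_branch_sets_almost_disjoint
    (σ : ℕ → List Bool → List Bool)
    (hmono : ∀ (m : ℕ) (s t : List Bool), s <+: t → σ m s <+: σ m t)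
    (hsplit : ∀ (m : ℕ) (s : List Bool),
      Incomparable (σ m (s ++ [false])) (σ m (s ++ [true])) ∧
      (σ m s <+: σ m (s ++ [false]) ∧ σ m s ≠ σ m (s ++ [false])) ∧
      (σ m s <+: σ m (s ++ [true]) ∧ σ m s ≠ σ m (s ++ [true])))
    (hinc : ∀ (n m m' : ℕ) (s s' : List Bool), m < n → m' < n →
      s.length = n + 1 → s'.length = n + 1 → (m, s) ≠ (m', s') →
      Incomparable (σ m s) (σ m' s'))
    (A : ℕ → List Bool → Set (List Bool))
    (hA : ∀ (m : ℕ) (s : List Bool),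
      A m s = {u : List Bool | ∃ t : List Bool, s <+: t ∧ u <+: σ m t}) :
    ∀ (m m' : ℕ) (s s' : List Bool),
      ¬ (m = m' ∧ (s <+: s' ∨ s' <+: s)) → (A m s ∩ A m' s').Finite := by
  intro m m' s s' hne
  set n := max (max m m') (max s.length s'.length) + 1 with hn
  have hm : m < n := by omega
  have hm' : m' < n := by omega
  have hs : s.length ≤ n + 1 := by omega
  have hs' : s'.length ≤ n + 1 := by omega
  have key : ∀ (k : ℕ) (v u : List Bool), v.length ≤ n + 1 → u ∈ A k v →
      ∃ w : List Bool, w.length = n + 1 ∧ v <+: w ∧ (u <+: σ k w ∨ σ k w <+: u) := by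
    intro k v u hv hu
    rw [hA] at hu
    obtain ⟨t, hvt, hut⟩ := hu
    refine ⟨(t ++ List.replicate (n + 1) false).take (n + 1), ?_, ?_, ?_⟩
    · simp [List.length_take]
    · exact List.prefix_take_iff.mpr ⟨hvt.trans (List.prefix_append _ _), hv⟩
    · have h1 : σ k ((t ++ List.replicate (n + 1) false).take (n + 1)) <+:
          σ k (t ++ List.replicate (n + 1) false) :=
        hmono _ _ _ (List.take_prefix _ _)
      have h2 : u <+: σ k (t ++ List.replicate (n + 1) false) :=
        hut.trans (hmono _ _ _ (List.prefix_append _ _))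
      exact List.prefix_or_prefix_of_prefix h2 h1
  have hsub : A m s ∩ A m' s' ⊆ ⋃ w ∈ {w : List Bool | w.length = n + 1},
      ({u | u <+: σ m w} ∪ {u | u <+: σ m' w}) := by
    rintro u ⟨hu1, hu2⟩
    obtain ⟨w, hwlen, hsw, hw⟩ := key m s u hs hu1
    obtain ⟨w', hwlen', hsw', hw'⟩ := key m' s' u hs' hu2
    rcases hw with h | h
    · exact Set.mem_biUnion hwlen (Or.inl h)
    rcases hw' with h' | h'
    · exact Set.mem_biUnion hwlen' (Or.inr h')
    have hne2 : (m, w) ≠ (m', w') := by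
      intro hp
      rw [Prod.mk.injEq] at hp
      exact hne ⟨hp.1, List.prefix_or_prefix_of_prefix hsw (hp.2 ▸ hsw')⟩
    have hincomp := hinc n m m' w w' hm hm' hwlen hwlen' hne2
    rcases List.prefix_or_prefix_of_prefix h h' with hc | hc
    · exact absurd hc hincomp.1
    · exact absurd hc hincomp.2
  refine Set.Finite.subset ?_ hsub
  refine Set.Finite.biUnion (List.finite_length_eq Bool _ ) ?_
  intro w _
  refine Set.Finite.union ?_ ?_ <;>
    exact (List.finite_length_le Bool _).subset fun u hu => hu.length_le
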